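/- Let (A, B) be a biabduction instance of quantifier-free symbolic heaps. The biabduction problem (A,B) has a solution — i.e., there exist quantifier-free symbolic heaps X, Y such that A*X is satisfiable and A*X ⊨ B*Y — if and only if the arithmetic formula β(A,B) is satisfiable over ℕ. -/

import Mathlib

/-! ## Array separation logic (ASL): syntax and stack-heap semantics -/

/-- Terms of array separation logic: variables (named by naturals), constants,
addition, and multiplication by a constant. -/
inductive Trm : Type where
  | var : ℕ → Trm
  | const : ℕ → Trm
  | add : Trm → Trm → Trm
  | smul : ℕ → Trm → Trm

/-- A stack maps variables to naturals. -/
abbrev Stack := ℕ → ℕ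

/-- Evaluation of terms under a stack. -/
def Trm.eval (s : Stack) : Trm → ℕ
  | .var x => s x
  | .const n => n
  | .add t u => t.eval s + u.eval s
  | .smul n t => n * t.eval s

/-- Variables occurring in a term. -/
def Trm.vars : Trm → Set ℕ
  | .var x => {x}
  | .const _ => ∅
  | .add t u => t.vars ∪ u.vars
  | .smul _ t => t.vars

/-- Pure formulas: conjunctions of atomic arithmetic constraints. -/
inductive PureF : Type where
  | tru : PureF
  | eq : Trm → Trm → PureF
  | ne : Trm → Trm → PureF
  | le : Trm → Trm → PureF
  | lt : Trm → Trm → PureF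
  | and : PureF → PureF → PureF

/-- Satisfaction of pure formulas (depends only on the stack). -/
def PureF.sat (s : Stack) : PureF → Prop
  | .tru => True
  | .eq t u => t.eval s = u.eval s
  | .ne t u => t.eval s ≠ u.eval s
  | .le t u => t.eval s ≤ u.eval s
  | .lt t u => t.eval s < u.eval s
  | .and p q => p.sat s ∧ q.sat s

def PureF.vars : PureF → Set ℕ
  | .tru => ∅
  | .eq t u => t.vars ∪ u.vars
  | .ne t u => t.vars ∪ u.vars
  | .le t u => t.vars ∪ u.vars
  | .lt t u => t.vars ∪ u.vars
  | .and p q => p.vars ∪ q.vars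

/-- The (top-level) terms occurring in a pure formula. -/
def PureF.trms : PureF → List Trm
  | .tru => []
  | .eq t u => [t, u]
  | .ne t u => [t, u]
  | .le t u => [t, u]
  | .lt t u => [t, u]
  | .and p q => p.trms ++ q.trms

/-- The conjuncts of a pure formula. -/
def PureF.conjuncts : PureF → List PureF
  | .and p q => p.conjuncts ++ q.conjuncts
  | p => [p]

/-- Finite conjunction. -/
def bigAnd : List PureF → PureF
  | [] => .tru
  | p :: ps => .and p (bigAnd ps)

/-- Spatial formulas: `emp`, points-to, arrays, and separating conjunction. -/
inductive Spatial : Type where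
  | emp : Spatial
  | pto : Trm → Trm → Spatial
  | arr : Trm → Trm → Spatial
  | star : Spatial → Spatial → Spatial

/-- Heaps: finite partial functions from ℕ (locations) to ℕ (values). -/
abbrev Heap := Finmap (fun _ : ℕ => ℕ)

/-- Satisfaction of spatial formulas. -/
def Spatial.sat (s : Stack) : Spatial → Heap → Prop
  | .emp, h => h = ∅
  | .pto t u, h =>
      h.keys = {Trm.eval s t} ∧ Finmap.lookup (Trm.eval s t) h = some (Trm.eval s u)
  | .arr t u, h =>
      Trm.eval s t ≤ Trm.eval s u ∧ h.keys = Finset.Icc (Trm.eval s t) (Trm.eval s u)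
  | .star F G, h =>
      ∃ h₁ h₂ : Heap, h₁.Disjoint h₂ ∧ h = h₁ ∪ h₂ ∧ F.sat s h₁ ∧ G.sat s h₂

def Spatial.vars : Spatial → Set ℕ
  | .emp => ∅
  | .pto t u => t.vars ∪ u.vars
  | .arr t u => t.vars ∪ u.vars
  | .star F G => F.vars ∪ G.vars

/-- The (top-level) terms occurring in a spatial formula. -/
def Spatial.trms : Spatial → List Trm
  | .emp => []
  | .pto t u => [t, u]
  | .arr t u => [t, u]
  | .star F G => F.trms ++ G.trms

/-- The points-to atoms of a spatial formula, as (address, value) pairs. -/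
def Spatial.ptos : Spatial → List (Trm × Trm)
  | .emp => []
  | .pto t u => [(t, u)]
  | .arr _ _ => []
  | .star F G => F.ptos ++ G.ptos

/-- The array atoms of a spatial formula, as endpoint pairs. -/
def Spatial.arrs : Spatial → List (Trm × Trm)
  | .emp => []
  | .pto _ _ => []
  | .arr t u => [(t, u)]
  | .star F G => F.arrs ++ G.arrs

/-- The arrays of the array abstraction `⟨A⟩`: each points-to `c ↦ d` is
replaced by the single-cell array `array(c,c)`. -/
def Spatial.absArrays : Spatial → List (Trm × Trm)
  | .emp => []
  | .pto t _ => [(t, t)]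
  | .arr t u => [(t, u)]
  | .star F G => F.absArrays ++ G.absArrays

/-- Finite separating conjunction. -/
def bigStar : List Spatial → Spatial
  | [] => .emp
  | F :: Fs => .star F (bigStar Fs)

/-- Quantifier-free symbolic heaps `Π : F`. -/
structure SymHeap : Type where
  pure : PureF
  spatial : Spatial

/-- Satisfaction of quantifier-free symbolic heaps. -/
def SymHeap.sat (s : Stack) (h : Heap) (A : SymHeap) : Prop :=
  A.pure.sat s ∧ A.spatial.sat s h

def SymHeap.vars (A : SymHeap) : Set ℕ := A.pure.vars ∪ A.spatial.vars

/-- All (top-level) terms occurring in a symbolic heap. -/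
def SymHeap.trms (A : SymHeap) : List Trm := A.pure.trms ++ A.spatial.trms

/-- Lifting `*` to symbolic heaps: conjoin pure parts, `*`-conjoin spatial parts. -/
def SymHeap.star (A X : SymHeap) : SymHeap :=
  ⟨.and A.pure X.pure, .star A.spatial X.spatial⟩

/-- Satisfiability of a symbolic heap. -/
def SymHeap.Satisfiable (A : SymHeap) : Prop := ∃ (s : Stack) (h : Heap), A.sat s h

/-- Semantic entailment between quantifier-free symbolic heaps. -/
def Entails (A B : SymHeap) : Prop := ∀ (s : Stack) (h : Heap), A.sat s h → B.sat s h

/-- Existentially quantified symbolic heaps `∃ z⃗. Π : F`. -/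
structure QSymHeap : Type where
  bound : List ℕ
  body : SymHeap

/-- Satisfaction of quantified symbolic heaps: some extension of the stack on the
bound variables satisfies the body. -/
def QSymHeap.sat (s : Stack) (h : Heap) (B : QSymHeap) : Prop :=
  ∃ s' : Stack, (∀ x : ℕ, x ∉ B.bound → s' x = s x) ∧ B.body.sat s' h

/-! ## The arithmetic encodings γ, β, φ, ψ₁, ψ₂, χ (interpreted over stacks) -/

/-- `s ⊨ γ(A)`: the Presburger satisfiability encoding of `A`, i.e. the pure part
of `A` together with well-definedness and pairwise disjointness of the arrays of
the array abstraction `⟨A⟩`. -/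
def gammaSat (A : SymHeap) (s : Stack) : Prop :=
  A.pure.sat s ∧
  (∀ p ∈ A.spatial.absArrays, Trm.eval s p.1 ≤ Trm.eval s p.2) ∧
  A.spatial.absArrays.Pairwise (fun p q =>
    Trm.eval s p.2 < Trm.eval s q.1 ∨ Trm.eval s q.2 < Trm.eval s p.1)

/-- `s ⊨ β(A,B)`. -/
def betaSat (A B : SymHeap) (s : Stack) : Prop :=
  gammaSat A s ∧ gammaSat B s ∧
  (∀ p ∈ B.spatial.ptos, ∀ q ∈ A.spatial.arrs,
      Trm.eval s p.1 < Trm.eval s q.1 ∨ Trm.eval s p.1 > Trm.eval s q.2) ∧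
  (∀ p ∈ A.spatial.ptos, ∀ q ∈ B.spatial.ptos,
      Trm.eval s p.1 ≠ Trm.eval s q.1 ∨ Trm.eval s p.2 = Trm.eval s q.2)

/-- The term set `Terms(A,B)`: all terms occurring in `A` and `B`, together with
the successor terms `b_i + 1`, `d_i + 1` (array right endpoints) and
`t_i + 1`, `v_i + 1` (points-to addresses). -/
def termSet (A B : SymHeap) : List Trm :=
  A.trms ++ B.trms ++
  (A.spatial.arrs.map fun p => Trm.add p.2 (Trm.const 1)) ++
  (B.spatial.arrs.map fun p => Trm.add p.2 (Trm.const 1)) ++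
  (A.spatial.ptos.map fun p => Trm.add p.1 (Trm.const 1)) ++
  (B.spatial.ptos.map fun p => Trm.add p.1 (Trm.const 1))

/-- A solution seed for the biabduction instance `(A,B)`. -/
def IsSolutionSeed (A B : SymHeap) (Δ : PureF) : Prop :=
  (∃ s : Stack, Δ.sat s) ∧
  (∀ s : Stack, Δ.sat s → betaSat A B s) ∧
  (∀ δ ∈ Δ.conjuncts, ∃ t ∈ termSet A B, ∃ u ∈ termSet A B,
      δ = PureF.lt t u ∨ δ = PureF.eq t u) ∧
  (∀ t ∈ termSet A B, ∀ u ∈ termSet A B, ∃ δ ∈ Δ.conjuncts,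
      δ = PureF.lt t u ∨ δ = PureF.lt u t ∨ δ = PureF.eq t u)

/-- The (quantifier-free) biabduction problem `(A,B)` has a solution. -/
def HasBiabductionSolution (A B : SymHeap) : Prop :=
  ∃ X Y : SymHeap, (A.star X).Satisfiable ∧ Entails (A.star X) (B.star Y)

/-- `s ⊨ φ(A,B)` (over the array abstractions of `A` and `B`). -/
def phiSat (A B : SymHeap) (s : Stack) : Prop :=
  ∃ x : ℕ,
    (∃ p ∈ A.spatial.absArrays, Trm.eval s p.1 ≤ x ∧ x ≤ Trm.eval s p.2) ∧
    ∀ q ∈ B.spatial.absArrays, x < Trm.eval s q.1 ∨ x > Trm.eval s q.2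

/-- `s ⊨ ψ₁(A,B)`: some points-to address of `B` is covered by an array of `A`. -/
def psi1Sat (A B : SymHeap) (s : Stack) : Prop :=
  ∃ p ∈ A.spatial.arrs, ∃ q ∈ B.spatial.ptos,
    Trm.eval s p.1 ≤ Trm.eval s q.1 ∧ Trm.eval s q.1 ≤ Trm.eval s p.2

/-- `s ⊨ ψ₂(A,B)`: some pointers of `A` and `B` share an address but disagree on
their contents. -/
def psi2Sat (A B : SymHeap) (s : Stack) : Prop :=
  ∃ p ∈ A.spatial.ptos, ∃ q ∈ B.spatial.ptos,
    Trm.eval s p.1 = Trm.eval s q.1 ∧ Trm.eval s p.2 ≠ Trm.eval s q.2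

/-- `s ⊨ χ(A, ∃z⃗.Q)`. -/
def chiSat (A : SymHeap) (zs : List ℕ) (Q : SymHeap) (s : Stack) : Prop :=
  gammaSat A s ∧
  ∀ s' : Stack, (∀ x : ℕ, x ∉ zs → s' x = s x) →
    (¬ gammaSat Q s' ∨ phiSat A Q s' ∨ phiSat Q A s' ∨
      psi1Sat A Q s' ∨ psi2Sat A Q s')

/-! ## Auxiliary development -/

section Aux

open Finmap

/-- Heap with domain given by a list, values by `f`. -/
def heapOfList (f : ℕ → ℕ) : List ℕ → Heap
  | [] => ∅
  | n :: l => (heapOfList f l).insert n (f n)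

lemma lookup_heapOfList (f : ℕ → ℕ) (l : List ℕ) (n : ℕ) :
    (heapOfList f l).lookup n = if n ∈ l then some (f n) else none := by
  induction l with
  | nil => simp [heapOfList]
  | cons m l ih =>
    by_cases h : n = m
    · subst h; simp [heapOfList, Finmap.lookup_insert]
    · simp only [heapOfList, Finmap.lookup_insert_of_ne _ h, ih, List.mem_cons, h, false_or]

/-- Heap with domain a finset, values by `f`. -/
def heapOf (D : Finset ℕ) (f : ℕ → ℕ) : Heap := heapOfList f (D.sort (· ≤ ·))

lemma lookup_heapOf (D : Finset ℕ) (f : ℕ → ℕ) (n : ℕ) :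
    (heapOf D f).lookup n = if n ∈ D then some (f n) else none := by
  rw [heapOf, lookup_heapOfList]; simp only [Finset.mem_sort]

lemma mem_heapOf {D : Finset ℕ} {f : ℕ → ℕ} {n : ℕ} : n ∈ heapOf D f ↔ n ∈ D := by
  rw [Finmap.mem_iff]
  constructor
  · rintro ⟨b, hb⟩; rw [lookup_heapOf] at hb; by_contra h; simp [h] at hb
  · intro h; exact ⟨f n, by rw [lookup_heapOf]; simp [h]⟩

lemma keys_heapOf (D : Finset ℕ) (f : ℕ → ℕ) : (heapOf D f).keys = D := by
  ext n; rw [Finmap.mem_keys, mem_heapOf]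

lemma heapOf_disjoint {D₁ D₂ : Finset ℕ} (h : Disjoint D₁ D₂) (f g : ℕ → ℕ) :
    (heapOf D₁ f).Disjoint (heapOf D₂ g) := by
  intro x hx hx2
  rw [mem_heapOf] at hx hx2
  exact Finset.disjoint_left.1 h hx hx2

lemma heapOf_union {D₁ D₂ : Finset ℕ} (h : Disjoint D₁ D₂) (f : ℕ → ℕ) :
    heapOf (D₁ ∪ D₂) f = heapOf D₁ f ∪ heapOf D₂ f := by
  apply Finmap.ext_lookup
  intro n
  by_cases h1 : n ∈ D₁
  · rw [Finmap.lookup_union_left (mem_heapOf.2 h1), lookup_heapOf, lookup_heapOf]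
    simp [h1, Finset.mem_union]
  · rw [Finmap.lookup_union_right (fun hc => h1 (mem_heapOf.1 hc)), lookup_heapOf, lookup_heapOf]
    by_cases h2 : n ∈ D₂ <;> simp [h1, h2, Finset.mem_union]

lemma heapOf_empty (f : ℕ → ℕ) : heapOf ∅ f = ∅ := by
  apply Finmap.ext_lookup
  intro n; rw [lookup_heapOf]; simp

/-- Domain of the array abstraction, as a finset. -/
def absDom (s : Stack) : Spatial → Finset ℕ
  | .emp => ∅
  | .pto t _ => {t.eval s}
  | .arr t u => Finset.Icc (t.eval s) (u.eval s)
  | .star F G => absDom s F ∪ absDom s G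

lemma mem_absDom {s : Stack} {F : Spatial} {n : ℕ} :
    n ∈ absDom s F ↔ ∃ p ∈ F.absArrays, p.1.eval s ≤ n ∧ n ≤ p.2.eval s := by
  induction F with
  | emp => simp [absDom, Spatial.absArrays]
  | pto t u => simp [absDom, Spatial.absArrays]; omega
  | arr t u => simp [absDom, Spatial.absArrays, Finset.mem_Icc]
  | star F G ihF ihG =>
    simp only [absDom, Finset.mem_union, ihF, ihG, Spatial.absArrays, List.mem_append]
    constructor
    · rintro (⟨p, hp, h⟩ | ⟨p, hp, h⟩) <;> exact ⟨p, by tauto, h⟩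
    · rintro ⟨p, hp | hp, h⟩
      · exact Or.inl ⟨p, hp, h⟩
      · exact Or.inr ⟨p, hp, h⟩

/-- Keys of any model equal the abstract domain. -/
lemma sat_keys {F : Spatial} {s : Stack} {h : Heap} (hs : F.sat s h) :
    h.keys = absDom s F := by
  induction F generalizing h with
  | emp => rw [hs]; simp [absDom]
  | pto t u => rw [hs.1]; simp [absDom]
  | arr t u => rw [hs.2]; rfl
  | star F G ihF ihG =>
    obtain ⟨h₁, h₂, hd, rfl, h1, h2⟩ := hs
    rw [Finmap.keys_union, ihF h1, ihG h2]; rfl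

lemma sat_bounds {F : Spatial} {s : Stack} {h : Heap} (hs : F.sat s h) :
    ∀ p ∈ F.absArrays, p.1.eval s ≤ p.2.eval s := by
  induction F generalizing h with
  | emp => simp [Spatial.absArrays]
  | pto t u => simp [Spatial.absArrays]
  | arr t u => simpa [Spatial.absArrays] using hs.1
  | star F G ihF ihG =>
    obtain ⟨h₁, h₂, hd, rfl, h1, h2⟩ := hs
    simp only [Spatial.absArrays, List.mem_append]
    rintro p (hp | hp)
    · exact ihF h1 p hp
    · exact ihG h2 p hp

/-- Interval disjointness relation. -/
def IntvDisj (s : Stack) (p q : Trm × Trm) : Prop :=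
  p.2.eval s < q.1.eval s ∨ q.2.eval s < p.1.eval s

lemma sat_pairwise {F : Spatial} {s : Stack} {h : Heap} (hs : F.sat s h) :
    F.absArrays.Pairwise (IntvDisj s) := by
  induction F generalizing h with
  | emp => simp [Spatial.absArrays]
  | pto t u => simp [Spatial.absArrays]
  | arr t u => simp [Spatial.absArrays]
  | star F G ihF ihG =>
    obtain ⟨h₁, h₂, hd, rfl, h1, h2⟩ := hs
    rw [Spatial.absArrays, List.pairwise_append]
    refine ⟨ihF h1, ihG h2, fun p hp q hq => ?_⟩
    by_contra hc
    rw [IntvDisj, not_or, not_lt, not_lt] at hc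
    have hbp := sat_bounds h1 p hp
    have hbq := sat_bounds h2 q hq
    set x := max (p.1.eval s) (q.1.eval s) with hx
    have hx1 : x ∈ absDom s F := mem_absDom.2 ⟨p, hp, by omega⟩
    have hx2 : x ∈ absDom s G := mem_absDom.2 ⟨q, hq, by omega⟩
    rw [← sat_keys h1, Finmap.mem_keys] at hx1
    rw [← sat_keys h2, Finmap.mem_keys] at hx2
    exact hd x (Finmap.mem_keys.2 (Finmap.mem_keys.1 hx1)) (Finmap.mem_keys.2 (Finmap.mem_keys.1 hx2))

lemma ptos_absArrays {F : Spatial} : ∀ p ∈ F.ptos, (p.1, p.1) ∈ F.absArrays := by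
  induction F with
  | emp => simp [Spatial.ptos]
  | pto t u => simp [Spatial.ptos, Spatial.absArrays]
  | arr t u => simp [Spatial.ptos]
  | star F G ihF ihG =>
    simp only [Spatial.ptos, Spatial.absArrays, List.mem_append]
    rintro p (hp | hp)
    · exact Or.inl (ihF p hp)
    · exact Or.inr (ihG p hp)

lemma arrs_absArrays {F : Spatial} : ∀ p ∈ F.arrs, p ∈ F.absArrays := by
  induction F with
  | emp => simp [Spatial.arrs]
  | pto t u => simp [Spatial.arrs]
  | arr t u => simp [Spatial.arrs, Spatial.absArrays]
  | star F G ihF ihG =>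
    simp only [Spatial.arrs, Spatial.absArrays, List.mem_append]
    rintro p (hp | hp)
    · exact Or.inl (ihF p hp)
    · exact Or.inr (ihG p hp)

lemma absArrays_cases {F : Spatial} :
    ∀ p ∈ F.absArrays, p ∈ F.arrs ∨ (p.2 = p.1 ∧ ∃ u, (p.1, u) ∈ F.ptos) := by
  induction F with
  | emp => simp [Spatial.absArrays]
  | pto t u => simp [Spatial.absArrays, Spatial.ptos, Spatial.arrs]
  | arr t u => simp [Spatial.absArrays, Spatial.arrs]
  | star F G ihF ihG =>
    simp only [Spatial.absArrays, Spatial.arrs, Spatial.ptos, List.mem_append]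
    rintro p (hp | hp)
    · rcases ihF p hp with h | ⟨h, u, hu⟩
      · exact Or.inl (Or.inl h)
      · exact Or.inr ⟨h, u, Or.inl hu⟩
    · rcases ihG p hp with h | ⟨h, u, hu⟩
      · exact Or.inl (Or.inr h)
      · exact Or.inr ⟨h, u, Or.inr hu⟩

lemma absArrays_trms {F : Spatial} : ∀ p ∈ F.absArrays, p.1 ∈ F.trms ∧ p.2 ∈ F.trms := by
  induction F with
  | emp => simp [Spatial.absArrays]
  | pto t u => simp [Spatial.absArrays, Spatial.trms]
  | arr t u => simp [Spatial.absArrays, Spatial.trms]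
  | star F G ihF ihG =>
    simp only [Spatial.absArrays, Spatial.trms, List.mem_append]
    rintro p (hp | hp)
    · exact ⟨Or.inl (ihF p hp).1, Or.inl (ihF p hp).2⟩
    · exact ⟨Or.inr (ihG p hp).1, Or.inr (ihG p hp).2⟩

lemma ptos_trms {F : Spatial} : ∀ p ∈ F.ptos, p.1 ∈ F.trms ∧ p.2 ∈ F.trms := by
  induction F with
  | emp => simp [Spatial.ptos]
  | pto t u => simp [Spatial.ptos, Spatial.trms]
  | arr t u => simp [Spatial.ptos]
  | star F G ihF ihG =>
    simp only [Spatial.ptos, Spatial.trms, List.mem_append]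
    rintro p (hp | hp)
    · exact ⟨Or.inl (ihF p hp).1, Or.inl (ihF p hp).2⟩
    · exact ⟨Or.inr (ihG p hp).1, Or.inr (ihG p hp).2⟩

lemma sat_ptos_lookup {F : Spatial} {s : Stack} {h : Heap} (hs : F.sat s h) :
    ∀ p ∈ F.ptos, h.lookup (p.1.eval s) = some (p.2.eval s) := by
  induction F generalizing h with
  | emp => simp [Spatial.ptos]
  | pto t u => simpa [Spatial.ptos] using hs.2
  | arr t u => simp [Spatial.ptos]
  | star F G ihF ihG =>
    obtain ⟨h₁, h₂, hd, rfl, h1, h2⟩ := hs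
    simp only [Spatial.ptos, List.mem_append]
    rintro p (hp | hp)
    · have hm : p.1.eval s ∈ h₁ := by
        rw [← Finmap.mem_keys, sat_keys h1]
        exact mem_absDom.2 ⟨(p.1, p.1), ptos_absArrays p hp, le_refl _, le_refl _⟩
      rw [Finmap.lookup_union_left hm]
      exact ihF h1 p hp
    · have hm : p.1.eval s ∈ h₂ := by
        rw [← Finmap.mem_keys, sat_keys h2]
        exact mem_absDom.2 ⟨(p.1, p.1), ptos_absArrays p hp, le_refl _, le_refl _⟩
      rw [Finmap.lookup_union_right (fun hc => hd _ hc hm)]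
      exact ihG h2 p hp

end Aux
section Aux2

lemma keys_insert_of_mem {h : Heap} {v c : ℕ} (hv : v ∈ h) :
    (h.insert v c).keys = h.keys := by
  ext a
  simp only [Finmap.mem_keys, Finmap.mem_insert]
  constructor
  · rintro (rfl | ha); exact hv; exact ha
  · exact Or.inr

/-- Modifying a value inside an array cell preserves satisfaction. -/
lemma sat_insert {F : Spatial} {s : Stack} {h : Heap} (hs : F.sat s h) (v c : ℕ)
    (hv : ∃ p ∈ F.arrs, p.1.eval s ≤ v ∧ v ≤ p.2.eval s) :
    F.sat s (h.insert v c) := by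
  induction F generalizing h with
  | emp => simp [Spatial.arrs] at hv
  | pto t u => simp [Spatial.arrs] at hv
  | arr t u =>
    obtain ⟨p, hp, hle⟩ := hv
    simp only [Spatial.arrs, List.mem_singleton] at hp
    subst hp
    have hmem : v ∈ h := by
      rw [← Finmap.mem_keys, hs.2, Finset.mem_Icc]; exact hle
    exact ⟨hs.1, by rw [keys_insert_of_mem hmem, hs.2]⟩
  | star F G ihF ihG =>
    obtain ⟨h₁, h₂, hd, rfl, h1, h2⟩ := hs
    simp only [Spatial.arrs, List.mem_append] at hv
    obtain ⟨p, hp | hp, hle⟩ := hv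
    · have hmem : v ∈ h₁ := by
        rw [← Finmap.mem_keys, sat_keys h1]
        exact mem_absDom.2 ⟨p, arrs_absArrays p hp, hle⟩
      refine ⟨h₁.insert v c, h₂, ?_, ?_, ihF h1 ⟨p, hp, hle⟩, h2⟩
      · intro x hx hx2
        rcases Finmap.mem_insert.1 hx with rfl | hx1
        · exact hd x hmem hx2
        · exact hd x hx1 hx2
      · rw [Finmap.insert_union]
    · have hmem : v ∈ h₂ := by
        rw [← Finmap.mem_keys, sat_keys h2]
        exact mem_absDom.2 ⟨p, arrs_absArrays p hp, hle⟩
      have hd' : (h₂.insert v c).Disjoint h₁ := by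
        intro x hx hx1
        rcases Finmap.mem_insert.1 hx with rfl | hx2
        · exact hd x hx1 hmem
        · exact hd x hx1 hx2
      refine ⟨h₁, h₂.insert v c, fun x hx1 hx2 => hd' x hx2 hx1, ?_, h1, ihG h2 ⟨p, hp, hle⟩⟩
      rw [Finmap.union_comm_of_disjoint hd, Finmap.insert_union,
        Finmap.union_comm_of_disjoint hd']

lemma absDom_disjoint {s : Stack} {F G : Spatial}
    (hb : ∀ p ∈ (F.star G).absArrays, p.1.eval s ≤ p.2.eval s)
    (hpw : (F.star G).absArrays.Pairwise (IntvDisj s)) :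
    Disjoint (absDom s F) (absDom s G) := by
  rw [Spatial.absArrays, List.pairwise_append] at hpw
  rw [Finset.disjoint_left]
  intro x hx1 hx2
  obtain ⟨p, hp, hlep⟩ := mem_absDom.1 hx1
  obtain ⟨q, hq, hleq⟩ := mem_absDom.1 hx2
  have := hpw.2.2 p hp q hq
  rw [IntvDisj] at this
  omega

/-- Realization: the gamma conditions imply satisfaction by the canonical heap. -/
lemma sat_heapOf {F : Spatial} {s : Stack} {f : ℕ → ℕ}
    (hb : ∀ p ∈ F.absArrays, p.1.eval s ≤ p.2.eval s)
    (hpw : F.absArrays.Pairwise (IntvDisj s))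
    (hf : ∀ p ∈ F.ptos, f (p.1.eval s) = p.2.eval s) :
    F.sat s (heapOf (absDom s F) f) := by
  induction F with
  | emp => exact heapOf_empty f
  | pto t u =>
    refine ⟨by rw [keys_heapOf]; rfl, ?_⟩
    rw [lookup_heapOf]
    simp only [absDom, Finset.mem_singleton, if_pos rfl]
    rw [hf (t, u) (by simp [Spatial.ptos])]; simp
  | arr t u =>
    refine ⟨hb (t, u) (by simp [Spatial.absArrays]), by rw [keys_heapOf]; rfl⟩
  | star F G ihF ihG =>
    have hdisj := absDom_disjoint hb hpw
    rw [Spatial.absArrays, List.pairwise_append] at hpw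
    simp only [Spatial.absArrays, List.mem_append] at hb
    simp only [Spatial.ptos, List.mem_append] at hf
    refine ⟨heapOf (absDom s F) f, heapOf (absDom s G) f,
      heapOf_disjoint hdisj f f, ?_, ?_, ?_⟩
    · show heapOf (absDom s F ∪ absDom s G) f = _
      exact heapOf_union hdisj f
    · exact ihF (fun p hp => hb p (Or.inl hp)) hpw.1 (fun p hp => hf p (Or.inl hp))
    · exact ihG (fun p hp => hb p (Or.inr hp)) hpw.2.1 (fun p hp => hf p (Or.inr hp))

end Aux2
section Aux3

lemma bigAnd_sat {s : Stack} {l : List PureF} :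
    (bigAnd l).sat s ↔ ∀ p ∈ l, p.sat s := by
  induction l with
  | nil => simp [bigAnd, PureF.sat]
  | cons p l ih => simp [bigAnd, PureF.sat, ih]

lemma pure_sat_congr {P : PureF} {s s' : Stack}
    (h : ∀ t ∈ P.trms, t.eval s = t.eval s') : P.sat s ↔ P.sat s' := by
  induction P with
  | tru => rfl
  | eq t u => simp only [PureF.sat, h t (by simp [PureF.trms]), h u (by simp [PureF.trms])]
  | ne t u => simp only [PureF.sat, h t (by simp [PureF.trms]), h u (by simp [PureF.trms])]
  | le t u => simp only [PureF.sat, h t (by simp [PureF.trms]), h u (by simp [PureF.trms])]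
  | lt t u => simp only [PureF.sat, h t (by simp [PureF.trms]), h u (by simp [PureF.trms])]
  | and p q ihp ihq =>
    simp only [PureF.trms, List.mem_append] at h
    exact and_congr (ihp fun t ht => h t (Or.inl ht)) (ihq fun t ht => h t (Or.inr ht))

/-- Pin the values of a list of terms. -/
def pin (s₀ : Stack) (ts : List Trm) : PureF :=
  bigAnd (ts.map fun t => .eq t (.const (t.eval s₀)))

lemma pin_sat_self (s₀ : Stack) (ts : List Trm) : (pin s₀ ts).sat s₀ := by
  rw [pin, bigAnd_sat]
  intro p hp
  simp only [List.mem_map] at hp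
  obtain ⟨t, _, rfl⟩ := hp
  simp [PureF.sat, Trm.eval]

lemma pin_sat_eval {s₀ s' : Stack} {ts : List Trm} (h : (pin s₀ ts).sat s') :
    ∀ t ∈ ts, t.eval s' = t.eval s₀ := by
  rw [pin, bigAnd_sat] at h
  intro t ht
  have := h (.eq t (.const (t.eval s₀))) (List.mem_map.2 ⟨t, ht, rfl⟩)
  simpa [PureF.sat, Trm.eval] using this

lemma absDom_congr {F : Spatial} {s s' : Stack}
    (h : ∀ t ∈ F.trms, t.eval s = t.eval s') : absDom s F = absDom s' F := by
  induction F with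
  | emp => rfl
  | pto t u => simp only [absDom, h t (by simp [Spatial.trms])]
  | arr t u => simp only [absDom, h t (by simp [Spatial.trms]), h u (by simp [Spatial.trms])]
  | star F G ihF ihG =>
    simp only [Spatial.trms, List.mem_append] at h
    simp only [absDom, ihF fun t ht => h t (Or.inl ht), ihG fun t ht => h t (Or.inr ht)]

/-- Spatial formula: a list of pointers at constant addresses. -/
def ptoListSp (g : ℕ → ℕ) (l : List ℕ) : Spatial :=
  bigStar (l.map fun n => .pto (.const n) (.const (g n)))

lemma ptoListSp_absArrays (g : ℕ → ℕ) (l : List ℕ) :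
    (ptoListSp g l).absArrays = l.map fun n => (Trm.const n, Trm.const n) := by
  induction l with
  | nil => rfl
  | cons n l ih => simp only [ptoListSp, bigStar, List.map_cons, Spatial.absArrays] at *; rw [ih]; rfl

lemma ptoListSp_ptos (g : ℕ → ℕ) (l : List ℕ) :
    (ptoListSp g l).ptos = l.map fun n => (Trm.const n, Trm.const (g n)) := by
  induction l with
  | nil => rfl
  | cons n l ih => simp only [ptoListSp, bigStar, List.map_cons, Spatial.ptos] at *; rw [ih]; rfl

lemma ptoListSp_arrs (g : ℕ → ℕ) (l : List ℕ) : (ptoListSp g l).arrs = [] := by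
  induction l with
  | nil => rfl
  | cons n l ih =>
    show [] ++ (ptoListSp g l).arrs = []
    rw [ih]; rfl

lemma absDom_ptoListSp (g : ℕ → ℕ) (l : List ℕ) (s : Stack) :
    absDom s (ptoListSp g l) = l.toFinset := by
  induction l with
  | nil => rfl
  | cons n l ih =>
    show ({Trm.eval s (Trm.const n)} : Finset ℕ) ∪ absDom s (ptoListSp g l) = _
    rw [show Trm.eval s (Trm.const n) = n from rfl, ih, List.toFinset_cons, Finset.insert_eq]

/-- Spatial formula: a list of singleton arrays at constant addresses. -/
def arrListSp (l : List ℕ) : Spatial :=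
  bigStar (l.map fun n => .arr (.const n) (.const n))

lemma arrListSp_absArrays (l : List ℕ) :
    (arrListSp l).absArrays = l.map fun n => (Trm.const n, Trm.const n) := by
  induction l with
  | nil => rfl
  | cons n l ih => simp only [arrListSp, bigStar, List.map_cons, Spatial.absArrays] at *; rw [ih]; rfl

lemma arrListSp_ptos (l : List ℕ) : (arrListSp l).ptos = [] := by
  induction l with
  | nil => rfl
  | cons n l ih =>
    show [] ++ (arrListSp l).ptos = []
    rw [ih]; rfl

lemma absDom_arrListSp (l : List ℕ) (s : Stack) :
    absDom s (arrListSp l) = l.toFinset := by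
  induction l with
  | nil => rfl
  | cons n l ih =>
    show Finset.Icc (Trm.eval s (Trm.const n)) (Trm.eval s (Trm.const n)) ∪
      absDom s (arrListSp l) = _
    rw [show Trm.eval s (Trm.const n) = n from rfl, Finset.Icc_self, ih, List.toFinset_cons, Finset.insert_eq]

lemma sorted_pairwise_intv (D : Finset ℕ) (s : Stack) :
    ((D.sort (· ≤ ·)).map fun n => (Trm.const n, Trm.const n)).Pairwise (IntvDisj s) := by
  rw [List.pairwise_map]
  refine (D.sortedLT_sort).pairwise.imp ?_
  intro a b hab
  exact Or.inl (by simpa [Trm.eval] using hab)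

/-- The value assigned by the pointers of a list at a given address. -/
def ptoVal (s : Stack) (l : List (Trm × Trm)) (d : ℕ → ℕ) (n : ℕ) : ℕ :=
  match l.find? (fun q => q.1.eval s == n) with
  | some q => q.2.eval s
  | none => d n

lemma ptoVal_eq {s : Stack} {l : List (Trm × Trm)} {d : ℕ → ℕ}
    (hpw : l.Pairwise fun p q => IntvDisj s (p.1, p.1) (q.1, q.1))
    {p : Trm × Trm} (hp : p ∈ l) : ptoVal s l d (p.1.eval s) = p.2.eval s := by
  rw [ptoVal]
  cases hfind : l.find? (fun q => q.1.eval s == p.1.eval s) with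
  | none =>
    exfalso
    exact absurd (by simp : (p.1.eval s == p.1.eval s) = true)
      (List.find?_eq_none.1 hfind p hp)
  | some q =>
    have hq : q ∈ l := List.mem_of_find?_eq_some hfind
    have heq : q.1.eval s = p.1.eval s := by simpa using List.find?_some hfind
    have hsym : List.Pairwise (fun p q => IntvDisj s (p.1, p.1) (q.1, q.1) ∨
        IntvDisj s (q.1, q.1) (p.1, p.1)) l := hpw.imp Or.inl
    rcases eq_or_ne q p with rfl | hne
    · rfl
    · have := (haveI : Std.Symm (fun p q : Trm × Trm => IntvDisj s (p.1, p.1) (q.1, q.1) ∨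
          IntvDisj s (q.1, q.1) (p.1, p.1)) := ⟨fun a b h => h.symm⟩; hsym.forall) hq hp hne
      rw [IntvDisj, IntvDisj] at this
      simp only at this
      omega

lemma ptoVal_none {s : Stack} {l : List (Trm × Trm)} {d : ℕ → ℕ} {n : ℕ}
    (h : ∀ q ∈ l, q.1.eval s ≠ n) : ptoVal s l d n = d n := by
  rw [ptoVal]
  cases hfind : l.find? (fun q => q.1.eval s == n) with
  | none => rfl
  | some q =>
    exact absurd (by simpa using List.find?_some hfind)
      (h q (List.mem_of_find?_eq_some hfind))

/-- Pairwise interval disjointness of absArrays transfers to pointer atoms. -/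
lemma ptos_pairwise {F : Spatial} (h : F.absArrays.Pairwise (IntvDisj s)) :
    F.ptos.Pairwise fun p q => IntvDisj s (p.1, p.1) (q.1, q.1) := by
  induction F with
  | emp => simp [Spatial.ptos]
  | pto t u => simp [Spatial.ptos]
  | arr t u => simp [Spatial.ptos]
  | star F G ihF ihG =>
    rw [Spatial.absArrays, List.pairwise_append] at h
    rw [Spatial.ptos, List.pairwise_append]
    exact ⟨ihF h.1, ihG h.2.1, fun p hp q hq =>
      h.2.2 _ (ptos_absArrays p hp) _ (ptos_absArrays q hq)⟩

end Aux3
/-- For a biabduction instance `(A,B)` (with `A`, `B` satisfiable quantifier-free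
symbolic heaps): the biabduction problem has a solution iff `β(A,B)` is
satisfiable over ℕ. -/
theorem stmt_10 (A B : SymHeap) (hA : A.Satisfiable) (hB : B.Satisfiable) :
    (∃ X Y : SymHeap, (A.star X).Satisfiable ∧ Entails (A.star X) (B.star Y)) ↔
    (∃ s : Stack, betaSat A B s) := by
  constructor
  · rintro ⟨X, Y, ⟨s, h, hsat⟩, hent⟩
    refine ⟨s, ?_⟩
    have hBY := hent s h hsat
    obtain ⟨⟨hApure, hXpure⟩, hASp⟩ := hsat
    obtain ⟨⟨hBpure, hYpure⟩, hBSp⟩ := hBY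
    obtain ⟨h₁, h₂, hd, heq, h1s, h2s⟩ := hASp
    obtain ⟨k₁, k₂, kd, hkeq, k1s, k2s⟩ := hBSp
    refine ⟨⟨hApure, sat_bounds h1s, sat_pairwise h1s⟩,
            ⟨hBpure, sat_bounds k1s, sat_pairwise k1s⟩, ?_, ?_⟩
    · -- pointers of B avoid arrays of A
      intro p hp q hq
      by_contra hc
      push_neg at hc
      obtain ⟨hc1, hc2⟩ := hc
      have hstar : (Spatial.star A.spatial X.spatial).sat s h :=
        ⟨h₁, h₂, hd, heq, h1s, h2s⟩
      have hsat' : (A.star X).sat s (h.insert (p.1.eval s) (p.2.eval s + 1)) := by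
        refine ⟨⟨hApure, hXpure⟩, ?_⟩
        exact sat_insert hstar _ _
          ⟨q, by simp only [Spatial.arrs]; exact List.mem_append.2 (Or.inl hq), hc1, hc2⟩
      have hBY' := hent s _ hsat'
      have hlk := sat_ptos_lookup hBY'.2 p
        (by exact List.mem_append.2 (Or.inl hp))
      rw [Finmap.lookup_insert] at hlk
      simp at hlk
    · -- agreeing pointers
      intro p hp q hq
      by_cases he : p.1.eval s = q.1.eval s
      · right
        have hstarA : (Spatial.star A.spatial X.spatial).sat s h :=
          ⟨h₁, h₂, hd, heq, h1s, h2s⟩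
        have hstarB : (Spatial.star B.spatial Y.spatial).sat s h :=
          ⟨k₁, k₂, kd, hkeq, k1s, k2s⟩
        have l1 := sat_ptos_lookup hstarA p
          (by simp only [Spatial.ptos]; exact List.mem_append.2 (Or.inl hp))
        have l2 := sat_ptos_lookup hstarB q
          (by simp only [Spatial.ptos]; exact List.mem_append.2 (Or.inl hq))
        rw [he] at l1
        rw [l1] at l2
        exact Option.some_injective _ l2
      · exact Or.inl he
  · rintro ⟨s₀, hβ⟩
    obtain ⟨⟨hApure, hAb, hApw⟩, ⟨hBpure, hBb, hBpw⟩, h3, h4⟩ := hβ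
    classical
    -- abbreviations
    have hAptosAbs : ∀ p ∈ A.spatial.ptos, p.1.eval s₀ ∈ absDom s₀ A.spatial :=
      fun p hp => mem_absDom.2 ⟨(p.1, p.1), ptos_absArrays p hp, le_refl _, le_refl _⟩
    have hAptos : ∀ p ∈ A.spatial.ptos,
        ptoVal s₀ A.spatial.ptos (ptoVal s₀ B.spatial.ptos fun _ => 0) (p.1.eval s₀) =
          p.2.eval s₀ :=
      fun p hp => ptoVal_eq (ptos_pairwise hApw) hp
    have hBptos : ∀ p ∈ B.spatial.ptos,
        ptoVal s₀ B.spatial.ptos (fun _ => 0) (p.1.eval s₀) = p.2.eval s₀ :=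
      fun p hp => ptoVal_eq (ptos_pairwise hBpw) hp
    set DA := absDom s₀ A.spatial with hDA
    set DB := absDom s₀ B.spatial with hDB
    set valB : ℕ → ℕ := ptoVal s₀ B.spatial.ptos (fun _ => 0) with hvalB
    set f : ℕ → ℕ := ptoVal s₀ A.spatial.ptos valB with hfdef
    have hXf : ∀ n ∈ DB \ DA, f n = valB n := by
      intro n hn
      refine ptoVal_none fun q hq hc => ?_
      exact (Finset.mem_sdiff.1 hn).2 (hc ▸ hAptosAbs q hq)
    refine ⟨⟨pin s₀ (A.trms ++ B.trms), ptoListSp valB ((DB \ DA).sort (· ≤ ·))⟩,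
      ⟨.tru, arrListSp ((DA \ DB).sort (· ≤ ·))⟩, ?_, ?_⟩
    · -- satisfiability of A * X
      refine ⟨s₀, heapOf (DA ∪ (DB \ DA)) f, ⟨hApure, pin_sat_self _ _⟩, ?_⟩
      rw [heapOf_union Finset.disjoint_sdiff f]
      refine ⟨_, _, heapOf_disjoint Finset.disjoint_sdiff f f, rfl,
        sat_heapOf hAb hApw hAptos, ?_⟩
      have hsx := sat_heapOf (F := ptoListSp valB ((DB \ DA).sort (· ≤ ·)))
        (s := s₀) (f := f) ?_ ?_ ?_
      · rwa [absDom_ptoListSp, Finset.sort_toFinset] at hsx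
      · rw [ptoListSp_absArrays]
        intro p hp
        simp only [List.mem_map] at hp
        obtain ⟨n, _, rfl⟩ := hp
        exact le_refl _
      · rw [ptoListSp_absArrays]
        exact sorted_pairwise_intv _ _
      · rw [ptoListSp_ptos]
        intro p hp
        simp only [List.mem_map] at hp
        obtain ⟨n, hn, rfl⟩ := hp
        exact hXf n (Finset.mem_sort (α := ℕ) (· ≤ ·) |>.1 hn)
    · -- entailment
      rintro s' h' ⟨⟨hA', hX'⟩, hsp⟩
      obtain ⟨h₁, h₂, hd, rfl, h1s, h2s⟩ := hsp
      have hevals : ∀ t ∈ A.trms ++ B.trms, t.eval s' = t.eval s₀ := pin_sat_eval hX'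
      have hevAs : ∀ t ∈ A.spatial.trms, t.eval s' = t.eval s₀ := fun t ht =>
        hevals t (List.mem_append.2 (Or.inl (List.mem_append.2 (Or.inr ht))))
      have hevBs : ∀ t ∈ B.spatial.trms, t.eval s' = t.eval s₀ := fun t ht =>
        hevals t (List.mem_append.2 (Or.inr (List.mem_append.2 (Or.inr ht))))
      have hevBp : ∀ t ∈ B.pure.trms, t.eval s' = t.eval s₀ := fun t ht =>
        hevals t (List.mem_append.2 (Or.inr (List.mem_append.2 (Or.inl ht))))
      have hkeys1 : h₁.keys = DA := by
        rw [sat_keys h1s, hDA]; exact absDom_congr hevAs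
      have hkeys2 : h₂.keys = DB \ DA := by
        rw [sat_keys h2s, absDom_ptoListSp, Finset.sort_toFinset]
      set g : ℕ → ℕ := fun n => (Finmap.lookup n (h₁ ∪ h₂)).getD 0 with hgdef
      have hlookup : ∀ n, n ∈ DA ∪ (DB \ DA) → (h₁ ∪ h₂).lookup n = some (g n) := by
        intro n hn
        have hmem : n ∈ (h₁ ∪ h₂).keys := by
          rw [Finmap.keys_union, hkeys1, hkeys2]; exact hn
        obtain ⟨b, hb⟩ := Finmap.mem_iff.1 (Finmap.mem_keys.1 hmem)
        rw [hb, hgdef]; simp [hb]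
      have hDBsub : DB ⊆ DA ∪ (DB \ DA) := by
        intro n hn
        by_cases hc : n ∈ DA
        · exact Finset.mem_union.2 (Or.inl hc)
        · exact Finset.mem_union.2 (Or.inr (Finset.mem_sdiff.2 ⟨hn, hc⟩))
      -- the values g assigns to pointer addresses of B
      have hgptos : ∀ p ∈ B.spatial.ptos, g (p.1.eval s') = p.2.eval s' := by
        intro p hp
        have he1 : p.1.eval s' = p.1.eval s₀ := hevBs _ (ptos_trms p hp).1
        have he2 : p.2.eval s' = p.2.eval s₀ := hevBs _ (ptos_trms p hp).2
        rw [he1, he2]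
        have hnB : p.1.eval s₀ ∈ DB :=
          mem_absDom.2 ⟨(p.1, p.1), ptos_absArrays p hp, le_refl _, le_refl _⟩
        by_cases hA1 : p.1.eval s₀ ∈ DA
        · obtain ⟨q, hq, hle⟩ := mem_absDom.1 hA1
          rcases absArrays_cases q hq with hqa | ⟨hq2, u, hu⟩
          · exfalso; have := h3 p hp q hqa; omega
          · rw [hq2] at hle
            have haddr : q.1.eval s₀ = p.1.eval s₀ := by omega
            have hval : u.eval s₀ = p.2.eval s₀ := by
              rcases h4 (q.1, u) hu p hp with hne | he
              · exact absurd haddr hne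
              · exact he
            have hlk := sat_ptos_lookup h1s (q.1, u) hu
            have heq1 : q.1.eval s' = q.1.eval s₀ := hevAs _ (ptos_trms (q.1, u) hu).1
            have heuu : u.eval s' = u.eval s₀ := hevAs _ (ptos_trms (q.1, u) hu).2
            have hm1 : p.1.eval s₀ ∈ h₁ := by
              rw [← Finmap.mem_keys, hkeys1]; exact hA1
            rw [hgdef]
            simp only
            rw [Finmap.lookup_union_left hm1, ← haddr, ← heq1, hlk]
            simp [heuu, hval]
        · have hX1 : p.1.eval s₀ ∈ DB \ DA := Finset.mem_sdiff.2 ⟨hnB, hA1⟩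
          have hmem : ((Trm.const (p.1.eval s₀)), (Trm.const (valB (p.1.eval s₀)))) ∈
              (ptoListSp valB ((DB \ DA).sort (· ≤ ·))).ptos := by
            rw [ptoListSp_ptos]
            exact List.mem_map.2 ⟨p.1.eval s₀, (Finset.mem_sort (α := ℕ) (· ≤ ·)).2 hX1, rfl⟩
          have hlk := sat_ptos_lookup h2s _ hmem
          simp only [Trm.eval] at hlk
          have hnm1 : p.1.eval s₀ ∉ h₁ := by
            rw [← Finmap.mem_keys, hkeys1]; exact hA1
          rw [hgdef]
          simp only
          rw [Finmap.lookup_union_right hnm1, hlk]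
          simp [hBptos p hp]
      refine ⟨⟨(pure_sat_congr hevBp).2 hBpure, trivial⟩,
        heapOf DB g, heapOf (DA \ DB) g,
        heapOf_disjoint Finset.disjoint_sdiff g g, ?_, ?_, ?_⟩
      · -- heap split
        apply Finmap.ext_lookup
        intro n
        by_cases hb : n ∈ DB
        · rw [Finmap.lookup_union_left (mem_heapOf.2 hb), lookup_heapOf, if_pos hb,
            hlookup n (hDBsub hb)]
        · rw [Finmap.lookup_union_right (fun hc => hb (mem_heapOf.1 hc)), lookup_heapOf]
          by_cases hy : n ∈ DA \ DB
          · rw [if_pos hy,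
              hlookup n (Finset.mem_union.2 (Or.inl (Finset.mem_sdiff.1 hy).1))]
          · rw [if_neg hy]
            have hnk : n ∉ (h₁ ∪ h₂).keys := by
              rw [Finmap.keys_union, hkeys1, hkeys2]
              intro hc
              rcases Finset.mem_union.1 hc with hc1 | hc2
              · exact hy (Finset.mem_sdiff.2 ⟨hc1, hb⟩)
              · exact hb (Finset.mem_sdiff.1 hc2).1
            exact Finmap.lookup_eq_none.2 (fun hc => hnk (Finmap.mem_keys.2 hc))
      · -- B part
        have hres := sat_heapOf (F := B.spatial) (s := s') (f := g) ?_ ?_ hgptos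
        · rwa [absDom_congr hevBs] at hres
        · intro p hp
          rw [hevBs _ (absArrays_trms p hp).1, hevBs _ (absArrays_trms p hp).2]
          exact hBb p hp
        · refine hBpw.imp_of_mem fun {p q} hp hq h => ?_
          rw [IntvDisj, hevBs _ (absArrays_trms _ hp).1, hevBs _ (absArrays_trms _ hp).2,
            hevBs _ (absArrays_trms _ hq).1, hevBs _ (absArrays_trms _ hq).2]
          exact h
      · -- Y part
        have hres := sat_heapOf (F := arrListSp ((DA \ DB).sort (· ≤ ·)))
          (s := s') (f := g) ?_ ?_ ?_
        · rwa [absDom_arrListSp, Finset.sort_toFinset] at hres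
        · rw [arrListSp_absArrays]
          intro p hp
          simp only [List.mem_map] at hp
          obtain ⟨n, _, rfl⟩ := hp
          exact le_refl _
        · rw [arrListSp_absArrays]
          exact sorted_pairwise_intv _ _
        · rw [arrListSp_ptos]
          intro p hp
          exact absurd hp (List.not_mem_nil (a := p))
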